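/- arXiv:1606.08872 — 2 statements merged into one kernel-verified Lean document; each statement's English description precedes it below -/
import Mathlib

section
/- Let 1 ≤ i ≤ j ≤ r, and for each i ≤ t ≤ j let k_t be an integer with 1 ≤ k_t ≤ t + 1; let π_{k_t} denote the cycle with ambient index t. If, for some 1 ≤ l ≤ r, π_{k_j}(α_l) is a negative root, then π_{k_i} π_{k_{i+1}} ⋯ π_{k_j}(α_l) is a negative root. -/
open Equiv Finset

/-- The simple reflection `s i = (i, i+1)` (1-based) in `S_{r+1}`, for `1 ≤ i ≤ r`;
the junk value `1` otherwise. -/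
def sr (r i : ℕ) : Equiv.Perm (Fin (r + 1)) :=
  if h : 1 ≤ i ∧ i ≤ r then Equiv.swap ⟨i - 1, by omega⟩ ⟨i, by omega⟩ else 1

/-- The cycle `π_k` with ambient index `i`, i.e. `s_i s_{i-1} ⋯ s_k`
(the identity when `k = i + 1`). -/
def cyc (r i k : ℕ) : Equiv.Perm (Fin (r + 1)) :=
  ((List.range (i + 1 - k)).map fun t => sr r (i - t)).prod

/-- The product `π_{k i} π_{k (i+1)} ⋯ π_{k j}`, the factor `π_{k t}` being the
cycle with ambient index `t`. -/
def cycProd (r : ℕ) (k : ℕ → ℕ) (i j : ℕ) : Equiv.Perm (Fin (r + 1)) :=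
  ((List.range' i (j + 1 - i)).map fun t => cyc r t (k t)).prod

/-- Coxeter length of a permutation: the number of inversions. -/
def lenInv {n : ℕ} (w : Equiv.Perm (Fin n)) : ℕ :=
  (Finset.univ.filter fun p : Fin n × Fin n => p.1 < p.2 ∧ w p.2 < w p.1).card

/-- Partial sums of a (1-based) composition: `psum c j = c 1 + ⋯ + c j`. -/
def psum (c : ℕ → ℕ) (j : ℕ) : ℕ := ∑ i ∈ Finset.Icc 1 j, c i

/-- The transpose partition of `(t 1, …, t b)`: `transp b t j = #{i ∈ [1,b] : t i ≥ j}`. -/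
def transp (b : ℕ) (t : ℕ → ℕ) (j : ℕ) : ℕ :=
  ((Finset.Icc 1 b).filter fun i => j ≤ t i).card

/-- The element of `Fin (r+1)` with value `i` (for `i ≤ r`). -/
def finOf (r i : ℕ) : Fin (r + 1) := ⟨min i r, by omega⟩

/-- `w(α_i)` is a positive root, where `α_i = e_i − e_{i+1}` (1-based), i.e. the
0-based pair `(i-1, i)`; `w(e_c − e_d) = e_{w c} − e_{w d}` is positive iff `w c < w d`. -/
def posRoot (r : ℕ) (w : Equiv.Perm (Fin (r + 1))) (i : ℕ) : Prop :=
  (w (finOf r (i - 1)) : ℕ) < w (finOf r i)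

/-- `w(α_i)` is a negative root. -/
def negRoot (r : ℕ) (w : Equiv.Perm (Fin (r + 1))) (i : ℕ) : Prop :=
  (w (finOf r i) : ℕ) < w (finOf r (i - 1))

/-- `w(α_i)` is a simple root. -/
def simpleRoot (r : ℕ) (w : Equiv.Perm (Fin (r + 1))) (i : ℕ) : Prop :=
  (w (finOf r i) : ℕ) = (w (finOf r (i - 1)) : ℕ) + 1

/-- `w(α_i) = α_j` (as roots: the image pair is `(j-1, j)` in 0-based indices). -/
def eqRoot (r : ℕ) (w : Equiv.Perm (Fin (r + 1))) (i j : ℕ) : Prop :=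
  (w (finOf r (i - 1)) : ℕ) = j - 1 ∧ (w (finOf r i) : ℕ) = j

/-- `Π_l Π_{l+1} ⋯ Π_a` for the composition `c` and tuple `k`, where
`Π_j = π_{k_{x_{j-1}}} ⋯ π_{k_{x_j - 1}}` and `x_j = psum c j`. -/
def tailProd (r a : ℕ) (c k : ℕ → ℕ) (l : ℕ) : Equiv.Perm (Fin (r + 1)) :=
  ((List.range' l (a + 1 - l)).map fun j => cycProd r k (psum c (j - 1)) (psum c j - 1)).prod

/-- The subgroup `W(P)`: generated by the simple reflections `s i` with `i ∈ [1,r]`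
avoiding the partial sums `x 1, …, x (a-1)` of the composition `c`. -/
def WP (r a : ℕ) (c : ℕ → ℕ) : Subgroup (Equiv.Perm (Fin (r + 1))) :=
  Subgroup.closure
    {g | ∃ i, 1 ≤ i ∧ i ≤ r ∧ (∀ j, 1 ≤ j → j ≤ a - 1 → i ≠ psum c j) ∧ g = sr r i}

/-- `α_i ∈ Δ_λ` for the composition `λ = (p 1, …, p m)` of `r+1`. -/
def inDelta (r m : ℕ) (p : ℕ → ℕ) (i : ℕ) : Prop :=
  1 ≤ i ∧ i ≤ r ∧ ∀ j, 1 ≤ j → j ≤ m - 1 → i ≠ psum p j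

/-- The left coset `H · g`. -/
def cosetOf {G : Type*} [Group G] (H : Subgroup G) (g : G) : Set G :=
  {x | ∃ h ∈ H, x = h * g}

/-- The (0-based) positions `u` and `v` lie in the same block of the composition
`μ^⊤ = transp b t`; a negative root `e_c − e_d` lies in `Φ⁻_{μ^⊤}` iff its two
indices lie in the same block. -/
def sameBlock (b : ℕ) (t : ℕ → ℕ) (u v : ℕ) : Prop :=
  ∃ j, 1 ≤ j ∧ j ≤ t 1 ∧
    psum (transp b t) (j - 1) ≤ u ∧ u < psum (transp b t) j ∧
    psum (transp b t) (j - 1) ≤ v ∧ v < psum (transp b t) j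

lemma sr_apply_val (r i : ℕ) (h1 : 1 ≤ i) (h2 : i ≤ r) (x : Fin (r+1)) :
    ((sr r i x : Fin (r+1)) : ℕ) =
      if (x : ℕ) = i - 1 then i else if (x : ℕ) = i then i - 1 else x := by
  unfold sr
  rw [dif_pos ⟨h1, h2⟩, Equiv.swap_apply_def]
  split_ifs with ha hb hc hd <;>
    simp only [Fin.ext_iff, Fin.val_mk] at * <;> omega

lemma cyc_eq_mul (r i k : ℕ) (h : k ≤ i) : cyc r i k = cyc r i (k+1) * sr r k := by
  unfold cyc
  have h1 : i + 1 - k = (i + 1 - (k+1)) + 1 := by omega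
  rw [h1, List.range_succ, List.map_append, List.prod_append]
  simp only [List.map_cons, List.map_nil, List.prod_cons, List.prod_nil, mul_one]
  rw [show i - (i + 1 - (k + 1)) = k from by omega]

lemma cyc_apply (r i : ℕ) (hir : i ≤ r) : ∀ n k, i + 1 - k = n → 1 ≤ k →
    ∀ x : Fin (r+1), ((cyc r i k x : Fin (r+1)) : ℕ) =
      if (x : ℕ) + 1 < k ∨ i < (x : ℕ) then (x : ℕ)
      else if (x : ℕ) + 1 = k then i else (x : ℕ) - 1 := by
  intro n
  induction n with
  | zero =>
    intro k hkn hk1 x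
    unfold cyc
    rw [hkn]
    simp only [List.range_zero, List.map_nil, List.prod_nil, Equiv.Perm.one_apply]
    split_ifs <;> omega
  | succ n ih =>
    intro k hkn hk1 x
    rw [cyc_eq_mul r i k (by omega), Equiv.Perm.mul_apply,
      ih (k+1) (by omega) (by omega), sr_apply_val r k hk1 (by omega)]
    split_ifs <;> omega

lemma cyc_le (r t kt M : ℕ) (htr : t ≤ r) (hk1 : 1 ≤ kt) (htM : t ≤ M)
    (x : Fin (r+1)) (hx : (x : ℕ) ≤ M) : ((cyc r t kt x : Fin (r+1)) : ℕ) ≤ M := by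
  rw [cyc_apply r t htr (t + 1 - kt) kt rfl hk1 x]
  split_ifs <;> omega

lemma cyc_fix (r t kt : ℕ) (htr : t ≤ r) (hk1 : 1 ≤ kt)
    (x : Fin (r+1)) (hx : t < (x : ℕ)) : cyc r t kt x = x := by
  apply Fin.ext
  rw [cyc_apply r t htr (t + 1 - kt) kt rfl hk1 x]
  split_ifs <;> omega

lemma listprod_le (r M : ℕ) (k : ℕ → ℕ) (L : List ℕ)
    (hL : ∀ t ∈ L, t ≤ M ∧ 1 ≤ k t) (hMr : M ≤ r) (x : Fin (r+1)) (hx : (x : ℕ) ≤ M) :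
    (((L.map fun t => cyc r t (k t)).prod x : Fin (r+1)) : ℕ) ≤ M := by
  induction L generalizing x with
  | nil => simpa using hx
  | cons a L ih =>
    rw [List.map_cons, List.prod_cons, Equiv.Perm.mul_apply]
    have ha := hL a (by simp)
    exact cyc_le r a (k a) M (by omega) ha.2 ha.1 _ (ih (fun t ht => hL t (by simp [ht])) x hx)

lemma listprod_fix (r : ℕ) (k : ℕ → ℕ) (L : List ℕ)
    (x : Fin (r+1)) (hL : ∀ t ∈ L, t ≤ r ∧ 1 ≤ k t ∧ t < (x : ℕ)) :
    ((L.map fun t => cyc r t (k t)).prod x : Fin (r+1)) = x := by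
  induction L with
  | nil => simp
  | cons a L ih =>
    rw [List.map_cons, List.prod_cons, Equiv.Perm.mul_apply,
      ih (fun t ht => hL t (by simp [ht]))]
    have ha := hL a (by simp)
    exact cyc_fix r a (k a) ha.1 ha.2.1 x ha.2.2

lemma cycProd_concat (r : ℕ) (k : ℕ → ℕ) (i j : ℕ) (hi : 1 ≤ i) (hij : i ≤ j) :
    cycProd r k i j = cycProd r k i (j - 1) * cyc r j (k j) := by
  unfold cycProd
  rw [show j + 1 - i = (j - i) + 1 from by omega, List.range'_concat,
    List.map_append, List.prod_append,
    show j - 1 + 1 - i = j - i from by omega,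
    show i + 1 * (j - i) = j from by omega]
  simp

/-- if `π_{k_j}(α_l)` is a negative root, so is
`π_{k_i} π_{k_{i+1}} ⋯ π_{k_j}(α_l)`. -/
theorem stmt9 (r i j l : ℕ) (hi : 1 ≤ i) (hij : i ≤ j) (hjr : j ≤ r)
    (hl1 : 1 ≤ l) (hlr : l ≤ r) (k : ℕ → ℕ)
    (hk : ∀ t, i ≤ t → t ≤ j → 1 ≤ k t ∧ k t ≤ t + 1)
    (hneg : negRoot r (cyc r j (k j)) l) :
    negRoot r (cycProd r k i j) l := by
  have hkj := hk j hij le_rfl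
  have vl : ((finOf r l : Fin (r+1)) : ℕ) = l := by simp [finOf]; omega
  have vl1 : ((finOf r (l - 1) : Fin (r+1)) : ℕ) = l - 1 := by simp [finOf]; omega
  have vj : ((finOf r j : Fin (r+1)) : ℕ) = j := by simp [finOf]; omega
  have e1 := cyc_apply r j hjr (j + 1 - k j) (k j) rfl hkj.1 (finOf r (l - 1))
  have e2 := cyc_apply r j hjr (j + 1 - k j) (k j) rfl hkj.1 (finOf r l)
  rw [vl1] at e1
  rw [vl] at e2
  unfold negRoot at hneg ⊢
  rw [e1, e2] at hneg
  have hkl : k j = l ∧ l ≤ j := by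
    split_ifs at hneg <;> omega
  have c1 : cyc r j (k j) (finOf r (l - 1)) = finOf r j := by
    apply Fin.ext
    rw [e1, vj]
    split_ifs <;> omega
  have c2 : cyc r j (k j) (finOf r l) = finOf r (l - 1) := by
    apply Fin.ext
    rw [e2, vl1]
    split_ifs <;> omega
  rw [cycProd_concat r k i j hi hij, Equiv.Perm.mul_apply, Equiv.Perm.mul_apply,
    c1, c2]
  have hmem : ∀ t ∈ List.range' i (j - 1 + 1 - i), i ≤ t ∧ t < j := by
    intro t ht
    rw [List.mem_range'_1] at ht
    omega
  have hP1 : cycProd r k i (j - 1) (finOf r j) = finOf r j := by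
    unfold cycProd
    apply listprod_fix
    intro t ht
    have h1 := hmem t ht
    have h2 := hk t h1.1 (by omega)
    exact ⟨by omega, h2.1, by omega⟩
  have hP2 : ((cycProd r k i (j - 1) (finOf r (l - 1)) : Fin (r+1)) : ℕ) ≤ j - 1 := by
    unfold cycProd
    apply listprod_le
    · intro t ht
      have h1 := hmem t ht
      have h2 := hk t h1.1 (by omega)
      exact ⟨by omega, h2.1⟩
    · omega
    · omega
  rw [hP1, vj]
  omega
end

section
/- Let 1 ≤ i ≤ j ≤ r, and for each i ≤ t ≤ j let k_t be an integer with 1 ≤ k_t ≤ t + 1; let π_{k_t} denote the cycle with ambient index t, and suppose the sequence k_i < k_{i+1} < ⋯ < k_j is strictly increasing. Then for every l with k_j < l ≤ j, one has π_{k_i} π_{k_{i+1}} ⋯ π_{k_j}(α_l) = α_{l + i − j − 1}. -/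
open Equiv Finset

lemma sr_fix (r m : ℕ) (x : Fin (r+1)) (h1 : (x:ℕ) ≠ m - 1) (h2 : (x:ℕ) ≠ m) :
    sr r m x = x := by
  unfold sr
  split
  · exact Equiv.swap_apply_of_ne_of_ne (Fin.ne_of_val_ne h1) (Fin.ne_of_val_ne h2)
  · rfl

lemma sr_down (r m : ℕ) (h1 : 1 ≤ m) (h2 : m ≤ r) (x : Fin (r+1)) (hx : (x:ℕ) = m) :
    ((sr r m x : Fin (r+1)) : ℕ) = m - 1 := by
  unfold sr
  rw [dif_pos ⟨h1, h2⟩]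
  have hx' : x = ⟨m, by omega⟩ := Fin.ext hx
  rw [hx', Equiv.swap_apply_right]

lemma cyc_cons (r i k : ℕ) (hk : 1 ≤ k) (h2 : k ≤ i) :
    cyc r i k = sr r i * cyc r (i-1) k := by
  unfold cyc
  have h : i + 1 - k = (i - k) + 1 := by omega
  have h' : (i - 1) + 1 - k = i - k := by omega
  rw [h, h', List.range_succ_eq_map, List.map_cons, List.prod_cons, List.map_map]
  have hfun : ((fun t => sr r (i - t)) ∘ Nat.succ) = fun t => sr r (i - 1 - t) := by
    funext t
    simp only [Function.comp]
    congr 1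
    omega
  rw [hfun, Nat.sub_zero]

lemma cyc_empty (r i k : ℕ) (h : i < k) : cyc r i k = 1 := by
  unfold cyc
  rw [Nat.sub_eq_zero_of_le (by omega), List.range_zero, List.map_nil, List.prod_nil]

lemma cyc_fix_s12 (r k : ℕ) (hk : 1 ≤ k) : ∀ i (x : Fin (r+1)), i < (x:ℕ) → cyc r i k x = x := by
  intro i
  induction i with
  | zero =>
    intro x hx
    rw [cyc_empty r 0 k (by omega)]
    rfl
  | succ n ih =>
    intro x hx
    by_cases h : k ≤ n + 1
    · rw [cyc_cons r (n+1) k hk h, Equiv.Perm.mul_apply,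
        show n + 1 - 1 = n from rfl, ih x (by omega)]
      exact sr_fix r (n+1) x (by omega) (by omega)
    · rw [cyc_empty r (n+1) k (by omega)]
      rfl

lemma cyc_step (r k : ℕ) (hk : 1 ≤ k) : ∀ i (x : Fin (r+1)), k ≤ (x:ℕ) → (x:ℕ) ≤ i →
    i ≤ r → ((cyc r i k x : Fin (r+1)) : ℕ) = (x:ℕ) - 1 := by
  intro i
  induction i with
  | zero => intro x h1 h2 _; omega
  | succ n ih =>
    intro x h1 h2 h3
    rw [cyc_cons r (n+1) k hk (by omega), Equiv.Perm.mul_apply,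
      show n + 1 - 1 = n from rfl]
    by_cases hx : (x:ℕ) = n + 1
    · rw [cyc_fix_s12 r k hk n x (by omega)]
      rw [sr_down r (n+1) (by omega) h3 x hx]
      omega
    · have hy := ih x h1 (by omega) (by omega)
      rw [sr_fix r (n+1) _ (by rw [hy]; omega) (by rw [hy]; omega)]
      exact hy

lemma cycProd_cons (r : ℕ) (k : ℕ → ℕ) (i j : ℕ) (h : i ≤ j) :
    cycProd r k i j = cyc r i (k i) * cycProd r k (i+1) j := by
  unfold cycProd
  have h1 : j + 1 - i = (j - i) + 1 := by omega
  have h2 : j + 1 - (i + 1) = j - i := by omega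
  rw [h1, h2, List.range'_succ, List.map_cons, List.prod_cons]

lemma cycProd_empty (r : ℕ) (k : ℕ → ℕ) (i j : ℕ) (h : j < i) : cycProd r k i j = 1 := by
  unfold cycProd
  rw [Nat.sub_eq_zero_of_le (by omega)]
  rfl

lemma cycProd_step (r : ℕ) (k : ℕ → ℕ) (j : ℕ) (hjr : j ≤ r) :
    ∀ n i (x : Fin (r+1)), 1 ≤ i → i + n = j →
    (∀ t, i ≤ t → t ≤ j → 1 ≤ k t ∧ k t ≤ (x:ℕ) - (j - t)) → (x:ℕ) ≤ j →
    ((cycProd r k i j x : Fin (r+1)) : ℕ) = (x:ℕ) - (j - i + 1) := by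
  intro n
  induction n with
  | zero =>
    intro i x hi hij hkk hx
    have hji : j = i := by omega
    rw [cycProd_cons r k i j (by omega), cycProd_empty r k (i+1) j (by omega)]
    have h1 := hkk i le_rfl (by omega)
    rw [mul_one]
    rw [cyc_step r (k i) h1.1 i x (by omega) (by omega) (by omega)]
    omega
  | succ n ih =>
    intro i x hi hij hkk hx
    rw [cycProd_cons r k i j (by omega), Equiv.Perm.mul_apply]
    have hy := ih (i+1) x (by omega) (by omega) (fun t ht1 ht2 => hkk t (by omega) ht2) hx
    have h1 := hkk i le_rfl (by omega)
    rw [cyc_step r (k i) h1.1 i _ (by rw [hy]; omega) (by rw [hy]; omega) (by omega)]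
    rw [hy]
    omega

/-- if `k_i < k_{i+1} < ⋯ < k_j` then for `k_j < l ≤ j`,
`π_{k_i} ⋯ π_{k_j}(α_l) = α_{l + i − j − 1}`. -/
theorem stmt12 (r i j l : ℕ) (hi : 1 ≤ i) (hij : i ≤ j) (hjr : j ≤ r) (k : ℕ → ℕ)
    (hk : ∀ t, i ≤ t → t ≤ j → 1 ≤ k t ∧ k t ≤ t + 1)
    (hinc : ∀ t, i ≤ t → t < j → k t < k (t + 1))
    (hl1 : k j < l) (hl2 : l ≤ j) :
    eqRoot r (cycProd r k i j) l (l + i - j - 1) := by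
  have hmono : ∀ d t, t + d = j → i ≤ t → k t + d ≤ k j := by
    intro d
    induction d with
    | zero =>
      intro t ht _
      have h : t = j := by omega
      subst h
      omega
    | succ n ih =>
      intro t ht hit
      have h1 := hinc t hit (by omega)
      have h2 := ih (t+1) (by omega) (by omega)
      omega
  have hki := hk i le_rfl hij
  have hmi := hmono (j - i) i (by omega) le_rfl
  have hval : ∀ m, m ≤ r → ((finOf r m : Fin (r+1)) : ℕ) = m := by
    intro m hm
    simp [finOf]
    omega
  constructor
  · have hv := hval (l - 1) (by omega)
    have := cycProd_step r k j hjr (j - i) i (finOf r (l-1)) hi (by omega)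
      (fun t ht1 ht2 => by
        have := hmono (j - t) t (by omega) ht1
        exact ⟨(hk t ht1 ht2).1, by rw [hv]; omega⟩)
      (by rw [hv]; omega)
    rw [this, hv]
    omega
  · have hv := hval l (by omega)
    have := cycProd_step r k j hjr (j - i) i (finOf r l) hi (by omega)
      (fun t ht1 ht2 => by
        have := hmono (j - t) t (by omega) ht1
        exact ⟨(hk t ht1 ht2).1, by rw [hv]; omega⟩)
      (by rw [hv]; omega)
    rw [this, hv]
    omega
end
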